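/- Let A₁ and A₂ be Wheeler r-GDFAs over the same finite linearly ordered alphabet Σ, both with n states. If BWT(A₁) = BWT(A₂), that is, for every 1 ≤ i ≤ r the strings OUT_i, IN_i, LAB_i of A₁ equal the corresponding strings of A₂, and the strings FIN of A₁ and A₂ are equal, then A₁ and A₂ are isomorphic. -/

import Mathlib

/-!
Common framework: generalized automata (GNFAs/GDFAs) over a finite alphabet `A`,
following the paper "A Myhill-Nerode theorem for generalized automata".
Strings over `A` are modeled as `List A`.
-/

/-- A path of edges (from `E`) from a state to a state whose concatenated labels
form the given string. -/
inductive EdgePath {A Q : Type} (E : Set (Q × Q × List A)) : Q → List A → Q → Prop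
  | refl (u : Q) : EdgePath E u [] u
  | step {u v w : Q} {ρ α : List A} :
      (u, v, ρ) ∈ E → EdgePath E v α w → EdgePath E u (ρ ++ α) w

/-- A generalized nondeterministic finite automaton (GNFA) over alphabet `A`
with a finite state type `Q`: a finite set of string-labeled edges, an initial state,
a set of final states; every state is reachable from the initial state and
co-reachable (final, or a path leads from it to a final state). -/
structure GNFA (A Q : Type) where
  E : Set (Q × Q × List A)
  init : Q
  final : Set Q
  finQ : Finite Q
  finE : E.Finite
  reach : ∀ u : Q, ∃ α : List A, EdgePath E init α u
  coreach : ∀ u : Q, ∃ (α : List A) (v : Q), v ∈ final ∧ EdgePath E u α v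

namespace GNFA

variable {A Q : Type}

/-- `I_α`: the set of states reached from the initial state by reading `α`. -/
def Iword (M : GNFA A Q) (α : List A) : Set Q := {u | EdgePath M.E M.init α u}

/-- `I_u`: the set of strings that can be read from the initial state to `u`. -/
def Istate (M : GNFA A Q) (u : Q) : Set (List A) := {α | EdgePath M.E M.init α u}

/-- The language recognized by the automaton. -/
def Lang (M : GNFA A Q) : Set (List A) := {α | ∃ u ∈ M.final, EdgePath M.E M.init α u}

/-- `W(A) = ⋃_{u ∈ Q} I_u`. -/
def WSet (M : GNFA A Q) : Set (List A) := {α | ∃ u : Q, EdgePath M.E M.init α u}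

/-- A GNFA is a GDFA if: no edge is labeled with the empty string, distinct edges
leaving a state have distinct labels, and the labels of edges leaving a state form
a prefix-free set. -/
def IsGDFA (M : GNFA A Q) : Prop :=
  (∀ u v ρ, (u, v, ρ) ∈ M.E → ρ ≠ []) ∧
  (∀ u v v' ρ, (u, v, ρ) ∈ M.E → (u, v', ρ) ∈ M.E → v = v') ∧
  (∀ u v v' ρ ρ', (u, v, ρ) ∈ M.E → (u, v', ρ') ∈ M.E → ρ <+: ρ' → ρ = ρ')

end GNFA

/-- Isomorphism of GNFAs: a bijection of states preserving the initial state,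
final states and labeled edges. -/
def GNFA.Isomorphic {A Q₁ Q₂ : Type} (M : GNFA A Q₁) (N : GNFA A Q₂) : Prop :=
  ∃ φ : Q₁ ≃ Q₂, φ M.init = N.init ∧ (∀ u, u ∈ M.final ↔ φ u ∈ N.final) ∧
    ∀ u v ρ, (u, v, ρ) ∈ M.E ↔ (φ u, φ v, ρ) ∈ N.E

section LangDefs
variable {A : Type}

/-- `Pref L`: the set of prefixes of strings of `L`. -/
def Pref (L : Set (List A)) : Set (List A) := {α | ∃ β ∈ L, α <+: β}

/-- Prefix-free kernel: the strings of `X` having no strict prefix in `X`. -/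
def pfKernel (X : Set (List A)) : Set (List A) :=
  {α ∈ X | ∀ β, β <+: α → β ≠ α → β ∉ X}

/-- `T_α = {ρ ∈ Σ⁺ : αρ ∈ W}`. -/
def Tset (W : Set (List A)) (α : List A) : Set (List A) := {ρ | ρ ≠ [] ∧ α ++ ρ ∈ W}

/-- `W` is locally bounded if `K(T_α)` is finite for every `α ∈ W`. -/
def LocallyBounded (W : Set (List A)) : Prop := ∀ α ∈ W, (pfKernel (Tset W α)).Finite

/-- `r` is an equivalence relation on `W`. -/
def IsEquivOn (W : Set (List A)) (r : List A → List A → Prop) : Prop :=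
  (∀ α ∈ W, r α α) ∧
  (∀ α β, α ∈ W → β ∈ W → r α β → r β α) ∧
  (∀ α β γ, α ∈ W → β ∈ W → γ ∈ W → r α β → r β γ → r α γ)

/-- Right-invariance of an equivalence relation on `W`. -/
def RightInvariant (W : Set (List A)) (r : List A → List A → Prop) : Prop :=
  ∀ α ∈ W, ∀ β ∈ W, r α β → ∀ φ : List A,
    (α ++ φ ∈ W ↔ β ++ φ ∈ W) ∧ (α ++ φ ∈ W → r (α ++ φ) (β ++ φ))

/-- The right-invariant refinement of `r` on `W`. -/
def riRef (W : Set (List A)) (r : List A → List A → Prop) :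
    List A → List A → Prop := fun α β =>
  ∀ φ : List A, (α ++ φ ∈ W ↔ β ++ φ ∈ W) ∧ (α ++ φ ∈ W → r (α ++ φ) (β ++ φ))

/-- The Myhill–Nerode equivalence `≡_{L,W}`: the right-invariant refinement of
`α ∼_{L,W} β ⟺ (α ∈ L ⟺ β ∈ L)`. -/
def mnEquiv (L W : Set (List A)) : List A → List A → Prop :=
  riRef W (fun α β => (α ∈ L ↔ β ∈ L))

/-- The `r`-class of `α` inside `W`. -/
def eqClass (W : Set (List A)) (r : List A → List A → Prop) (α : List A) :
    Set (List A) := {β ∈ W | r α β}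

/-- `r` has finite index on `W`: the set of its classes is finite. -/
def FiniteIndex (W : Set (List A)) (r : List A → List A → Prop) : Prop :=
  {s : Set (List A) | ∃ α ∈ W, s = eqClass W r α}.Finite

/-- `L` is a union of `r`-classes (for `L ⊆ W`). -/
def UnionOfClasses (W : Set (List A)) (r : List A → List A → Prop)
    (L : Set (List A)) : Prop := ∀ α ∈ L, ∀ β ∈ W, r α β → β ∈ L

end LangDefs

namespace GNFA
variable {A Q : Type}

/-- `α ∼_A β ⟺ I_α = I_β` (on `W(A)`). -/
def simA (M : GNFA A Q) : List A → List A → Prop := fun α β => M.Iword α = M.Iword β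

/-- `≡_A`: the right-invariant refinement of `∼_A` on `W(A)`. -/
def equivA (M : GNFA A Q) : List A → List A → Prop := riRef M.WSet M.simA

end GNFA

section WheelerDefs
variable {A Q : Type} [LinearOrder A]

/-- Co-lexicographic strict order on strings: compare reverses lexicographically. -/
def colexLt (α β : List A) : Prop := List.Lex (· < ·) α.reverse β.reverse

/-- Co-lexicographic (reflexive) order on strings. -/
def colexLe (α β : List A) : Prop := colexLt α β ∨ α = β

namespace GNFA

/-- The relation `⪯_A` on states: reflexive, and for distinct `u, v`,
`u ≺_A v` iff every string of `I_u` is co-lexicographically smaller than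
every string of `I_v`. -/
def ordA (M : GNFA A Q) (u v : Q) : Prop :=
  u = v ∨ ∀ α ∈ M.Istate u, ∀ β ∈ M.Istate v, colexLt α β

/-- The strict relation `≺_A`. -/
def sordA (M : GNFA A Q) (u v : Q) : Prop := u ≠ v ∧ M.ordA u v

/-- A GDFA is Wheeler if `⪯_A` is a total order on states. -/
def Wheeler (M : GNFA A Q) : Prop :=
  (∀ u v, M.ordA u v → M.ordA v u → u = v) ∧
  (∀ u v w, M.ordA u v → M.ordA v w → M.ordA u w) ∧
  (∀ u v, M.ordA u v ∨ M.ordA v u)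

/-- `G^≺(α)`: states reached only by strings co-lexicographically smaller than `α`. -/
def Gprec (M : GNFA A Q) (α : List A) : Set Q := {u | ∀ β ∈ M.Istate u, colexLt β α}

/-- `G_⊣(α)`: states reached by some string suffixed by `α`. -/
def Gsuf (M : GNFA A Q) (α : List A) : Set Q := {u | ∃ β ∈ M.Istate u, α <:+ β}

/-- `G^≺_⊣(α) = G^≺(α) ∪ G_⊣(α)`. -/
def GprecSuf (M : GNFA A Q) (α : List A) : Set Q := M.Gprec α ∪ M.Gsuf α

/-- `G*(α)`: states reached by an edge whose label is suffixed by `α`. -/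
def Gstar (M : GNFA A Q) (α : List A) : Set Q :=
  {v | ∃ v' ρ, (v', v, ρ) ∈ M.E ∧ α <:+ ρ}

/-- `λ(u)`: the set of nonempty strings labeling some edge entering `u`. -/
def lam (M : GNFA A Q) (u : Q) : Set (List A) := {ρ | ρ ≠ [] ∧ ∃ u', (u', u, ρ) ∈ M.E}

/-- `out(U, ρ)`: the number of edges labeled `ρ` leaving states in `U`. -/
noncomputable def outCount (M : GNFA A Q) (U : Set Q) (ρ : List A) : ℕ :=
  {e ∈ M.E | e.1 ∈ U ∧ e.2.2 = ρ}.ncard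

/-- `in(U, ρ)`: the number of edges labeled `ρ` entering states in `U`. -/
noncomputable def inCount (M : GNFA A Q) (U : Set Q) (ρ : List A) : ℕ :=
  {e ∈ M.E | e.2.1 ∈ U ∧ e.2.2 = ρ}.ncard

end GNFA

/-- `seg q j = Q[1, j]`: the first `j` states in the enumeration `q` of the states. -/
def seg {Q : Type} {n : ℕ} (q : Fin n → Q) (j : ℕ) : Set Q :=
  {u | ∃ i : Fin n, (i : ℕ) < j ∧ q i = u}

end WheelerDefs

section BWTAux

variable {A : Type} [LinearOrder A]

theorem BWT.not_lex_nil {r : A → A → Prop} {x : List A} (h : List.Lex r x []) : False := by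
  cases h

theorem BWT.not_colexLt_nil (α : List A) : ¬ colexLt α [] := fun h => BWT.not_lex_nil h

theorem BWT.colexLt_asymm {α β : List A} (h : colexLt α β) : ¬ colexLt β α := fun h' =>
  (List.Lex.asymm (· < · : A → A → Prop)).asymm _ _ h h'

theorem BWT.colexLt_append_right {α β : List A} (h : colexLt α β) (ρ : List A) :
    colexLt (α ++ ρ) (β ++ ρ) := by
  unfold colexLt at *
  rw [List.reverse_append, List.reverse_append]
  exact List.Lex.append_left _ h _

theorem BWT.lex_append_of_length_eq {r : A → A → Prop} :
    ∀ {x y : List A}, List.Lex r x y → x.length = y.length →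
      ∀ a b : List A, List.Lex r (x ++ a) (y ++ b) := by
  intro x y h
  induction h with
  | nil => intro hl; simp at hl
  | cons h ih => intro hl a b; exact List.Lex.cons (ih (by simpa using hl) a b)
  | rel h => intro hl a b; exact List.Lex.rel h

theorem BWT.colexLt_append_of_length_eq {ρ ρ' : List A} (h : colexLt ρ ρ')
    (hl : ρ.length = ρ'.length) (β β' : List A) : colexLt (β ++ ρ) (β' ++ ρ') := by
  unfold colexLt at *
  rw [List.reverse_append, List.reverse_append]
  exact BWT.lex_append_of_length_eq h (by simpa using hl) _ _

theorem EdgePath.snoc {Q : Type} {E : Set (Q × Q × List A)} :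
    ∀ {s u : Q} {β : List A}, EdgePath E s β u → ∀ {v : Q} {ρ : List A},
      (u, v, ρ) ∈ E → EdgePath E s (β ++ ρ) v := by
  intro s u β h
  induction h with
  | refl w => intro v ρ he; simpa using EdgePath.step he (EdgePath.refl v)
  | step h1 _ ih => intro v ρ he; rw [List.append_assoc]; exact EdgePath.step h1 (ih he)

/-- Wheeler key lemma: targets of edges are monotone in (label colex, source) order. -/
theorem BWT.target_mono {Q : Type} {n : ℕ} (M : GNFA A Q)
    (q : Fin n → Q) (hmono : ∀ i j : Fin n, i < j → M.sordA (q i) (q j))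
    {l l' m m' : Fin n} {ρ ρ' : List A}
    (he : (q l, q m, ρ) ∈ M.E) (he' : (q l', q m', ρ') ∈ M.E)
    (hk : (colexLt ρ ρ' ∧ ρ.length = ρ'.length) ∨ (ρ = ρ' ∧ l < l')) : m ≤ m' := by
  by_contra hlt
  push_neg at hlt
  obtain ⟨β, hβ⟩ := M.reach (q l)
  obtain ⟨β', hβ'⟩ := M.reach (q l')
  have hα : EdgePath M.E M.init (β ++ ρ) (q m) := hβ.snoc he
  have hα' : EdgePath M.E M.init (β' ++ ρ') (q m') := hβ'.snoc he'
  have hcl : colexLt (β ++ ρ) (β' ++ ρ') := by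
    rcases hk with ⟨h1, h2⟩ | ⟨rfl, hll⟩
    · exact BWT.colexLt_append_of_length_eq h1 h2 β β'
    · have hs := hmono l l' hll
      have hb : colexLt β β' := by
        rcases hs.2 with he0 | hcl0
        · exact absurd he0 hs.1
        · exact hcl0 β hβ β' hβ'
      exact BWT.colexLt_append_right hb ρ
  have hs' := hmono m' m hlt
  have hrev : colexLt (β' ++ ρ') (β ++ ρ) := by
    rcases hs'.2 with he0 | hcl0
    · exact absurd he0 hs'.1
    · exact hcl0 _ hα' _ hα
  exact BWT.colexLt_asymm hcl hrev

/-- The initial state of a Wheeler GDFA is the first state in Wheeler order. -/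
theorem BWT.init_index_le {Q : Type} {n : ℕ} (M : GNFA A Q)
    (q : Fin n → Q) (hmono : ∀ i j : Fin n, i < j → M.sordA (q i) (q j))
    {l : Fin n} (hl : q l = M.init) (j : Fin n) : l ≤ j := by
  by_contra h
  push_neg at h
  obtain ⟨β, hβ⟩ := M.reach (q j)
  have hs := hmono j l h
  rcases hs.2 with he | hcl
  · exact hs.1 he
  · have hmem : ([] : List A) ∈ M.Istate (q l) := by
      show EdgePath M.E M.init [] (q l)
      rw [hl]; exact EdgePath.refl _
    exact BWT.not_colexLt_nil β (hcl β hβ [] hmem)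

/-- Two monotone maps on a finite linear order with equal fiber cardinalities are equal. -/
theorem BWT.monotone_eq_of_fibers {α β : Type} [Fintype α] [LinearOrder α] [LinearOrder β]
    (f g : α → β) (hf : Monotone f) (hg : Monotone g)
    (h : ∀ y, {x | f x = y}.ncard = {x | g x = y}.ncard) : f = g := by
  classical
  have h : ∀ y, (Finset.univ.filter fun x => f x = y).card
      = (Finset.univ.filter fun x => g x = y).card := by
    intro y
    have hy := h y
    rwa [Set.ncard_eq_toFinset_card', Set.ncard_eq_toFinset_card',
      Set.toFinset_setOf, Set.toFinset_setOf] at hy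
  set t : Finset β := Finset.univ.image f ∪ Finset.univ.image g with ht
  have hsum : ∀ (f' : α → β), (∀ x, f' x ∈ t) → ∀ y,
      (Finset.univ.filter fun x => f' x ≤ y).card
        = ∑ b ∈ t.filter (· ≤ y), (Finset.univ.filter fun x => f' x = b).card := by
    intro f' hft y
    refine (Finset.card_eq_sum_card_fiberwise (f := f') (t := t.filter (· ≤ y)) ?_).trans
      (Finset.sum_congr rfl ?_)
    · intro x hx
      exact Finset.mem_filter.2 ⟨hft x, (Finset.mem_filter.1 hx).2⟩
    · intro b hb
      congr 1
      ext x
      simp only [Finset.mem_filter, Finset.mem_univ, true_and]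
      exact ⟨fun hx => hx.2, fun hx => ⟨le_of_eq_of_le hx (Finset.mem_filter.1 hb).2, hx⟩⟩
  have hlow : ∀ y, (Finset.univ.filter fun x => f x ≤ y)
      = (Finset.univ.filter fun x => g x ≤ y) := by
    intro y
    have hcard : (Finset.univ.filter fun x => f x ≤ y).card
        = (Finset.univ.filter fun x => g x ≤ y).card := by
      rw [hsum f (fun x => Finset.mem_union_left _
            (Finset.mem_image_of_mem f (Finset.mem_univ x))) y,
          hsum g (fun x => Finset.mem_union_right _
            (Finset.mem_image_of_mem g (Finset.mem_univ x))) y]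
      exact Finset.sum_congr rfl fun b _ => h b
    have hsub : (Finset.univ.filter fun x => f x ≤ y) ⊆ (Finset.univ.filter fun x => g x ≤ y)
        ∨ (Finset.univ.filter fun x => g x ≤ y) ⊆ (Finset.univ.filter fun x => f x ≤ y) := by
      by_contra hc
      push_neg at hc
      obtain ⟨a, ha1, ha2⟩ := Finset.not_subset.1 hc.1
      obtain ⟨b, hb2, hb1⟩ := Finset.not_subset.1 hc.2
      have hfa : f a ≤ y := (Finset.mem_filter.1 ha1).2
      have hgb : g b ≤ y := (Finset.mem_filter.1 hb2).2
      rcases le_total a b with hab | hba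
      · exact ha2 (Finset.mem_filter.2 ⟨Finset.mem_univ a, le_trans (hg hab) hgb⟩)
      · exact hb1 (Finset.mem_filter.2 ⟨Finset.mem_univ b, le_trans (hf hba) hfa⟩)
    rcases hsub with hs | hs
    · exact Finset.eq_of_subset_of_card_le hs hcard.ge
    · exact (Finset.eq_of_subset_of_card_le hs hcard.le).symm
  funext x
  have h1 : x ∈ Finset.univ.filter fun z => g z ≤ f x := by
    rw [← hlow]; exact Finset.mem_filter.2 ⟨Finset.mem_univ x, le_refl _⟩
  have h2 : x ∈ Finset.univ.filter fun z => f z ≤ g x := by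
    rw [hlow]; exact Finset.mem_filter.2 ⟨Finset.mem_univ x, le_refl _⟩
  exact le_antisymm (Finset.mem_filter.1 h2).2 (Finset.mem_filter.1 h1).2

/-- The fiber of the target map over a state has cardinality the `i`-indegree. -/
theorem BWT.fiber_card {Q : Type} {n : ℕ} (M : GNFA A Q) (hD : M.IsGDFA)
    (q : Fin n → Q) (hq : Function.Bijective q)
    {S : Set (Fin n × List A)} {i : ℕ}
    (hS : ∀ p ∈ S, p.2.length = i)
    (hSall : ∀ l ρ v, (q l, v, ρ) ∈ M.E → ρ.length = i → (l, ρ) ∈ S)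
    (t : ↥S → Fin n) (ht : ∀ p, (q p.1.1, q (t p), p.1.2) ∈ M.E) (y : Fin n) :
    {p : ↥S | t p = y}.ncard = {e ∈ M.E | e.2.1 = q y ∧ e.2.2.length = i}.ncard := by
  have himg : {e ∈ M.E | e.2.1 = q y ∧ e.2.2.length = i}
      = (fun p : ↥S => (q p.1.1, q (t p), p.1.2)) '' {p | t p = y} := by
    ext e
    constructor
    · rintro ⟨heE, hey, hei⟩
      obtain ⟨u, v, ρ⟩ := e
      simp only at hey hei
      obtain ⟨l, rfl⟩ := hq.2 u
      have hpS : (l, ρ) ∈ S := hSall l ρ v heE hei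
      have hteq : q (t ⟨(l, ρ), hpS⟩) = v := hD.2.1 _ _ _ _ (ht ⟨(l, ρ), hpS⟩) heE
      refine ⟨⟨(l, ρ), hpS⟩, ?_, ?_⟩
      · show t ⟨(l, ρ), hpS⟩ = y
        exact hq.1 (hteq.trans hey)
      · simp only
        rw [hteq]
    · rintro ⟨p, hp, rfl⟩
      exact ⟨ht p, congrArg q hp, hS p.1 p.2⟩
  rw [himg, Set.ncard_image_of_injOn]
  rintro ⟨⟨l, ρ⟩, hp⟩ - ⟨⟨l', ρ'⟩, hp'⟩ - heq
  simp only [Prod.mk.injEq] at heq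
  exact Subtype.ext (Prod.ext (hq.1 heq.1) heq.2.2)

/-- Core lemma: edges transfer from `M₁` to `M₂`. -/
theorem BWT.edge_transfer {Q₁ Q₂ : Type}
    (r : ℕ) (M₁ : GNFA A Q₁) (M₂ : GNFA A Q₂)
    (hD₁ : M₁.IsGDFA) (hr₁ : ∀ e ∈ M₁.E, e.2.2.length ≤ r)
    (hD₂ : M₂.IsGDFA) (hr₂ : ∀ e ∈ M₂.E, e.2.2.length ≤ r)
    {n : ℕ} (q₁ : Fin n → Q₁) (hq₁ : Function.Bijective q₁)
    (hmono₁ : ∀ i j : Fin n, i < j → M₁.sordA (q₁ i) (q₁ j))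
    (q₂ : Fin n → Q₂) (hq₂ : Function.Bijective q₂)
    (hmono₂ : ∀ i j : Fin n, i < j → M₂.sordA (q₂ i) (q₂ j))
    (hOUTLAB : ∀ (l : Fin n) (ρ : List A), 1 ≤ ρ.length → ρ.length ≤ r →
      ((∃ v, (q₁ l, v, ρ) ∈ M₁.E) ↔ (∃ v, (q₂ l, v, ρ) ∈ M₂.E)))
    (hIN : ∀ (l : Fin n) (i : ℕ), 1 ≤ i → i ≤ r →
      {e ∈ M₁.E | e.2.1 = q₁ l ∧ e.2.2.length = i}.ncard =
        {e ∈ M₂.E | e.2.1 = q₂ l ∧ e.2.2.length = i}.ncard)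
    (l m : Fin n) (ρ : List A) (he : (q₁ l, q₁ m, ρ) ∈ M₁.E) :
    (q₂ l, q₂ m, ρ) ∈ M₂.E := by
  classical
  set i := ρ.length with hidef
  have hi1 : 1 ≤ i := List.length_pos_iff.2 (hD₁.1 _ _ _ he)
  have hir : i ≤ r := hr₁ _ he
  set S : Set (Fin n × List A) :=
    {p | p.2.length = i ∧ ∃ v, (q₁ p.1, v, p.2) ∈ M₁.E} with hSdef
  have hSfin : S.Finite := by
    have hsub : S ⊆ (fun e : Q₁ × Q₁ × List A =>
        ((Equiv.ofBijective q₁ hq₁).symm e.1, e.2.2)) '' M₁.E := by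
      rintro ⟨l', ρ'⟩ ⟨hlen, v, hv⟩
      exact ⟨(q₁ l', v, ρ'), hv, by simp [Equiv.ofBijective_symm_apply_apply]⟩
    exact (M₁.finE.image _).subset hsub
  haveI : Finite ↥S := hSfin.to_subtype
  haveI : Fintype ↥S := Fintype.ofFinite _
  have hSmem : ∀ p ∈ S, p.2.length = i := fun p hp => hp.1
  have hSall₁ : ∀ l' ρ' v, (q₁ l', v, ρ') ∈ M₁.E → ρ'.length = i → (l', ρ') ∈ S :=
    fun l' ρ' v hv hlen => ⟨hlen, v, hv⟩
  have hSall₂ : ∀ l' ρ' v, (q₂ l', v, ρ') ∈ M₂.E → ρ'.length = i → (l', ρ') ∈ S := by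
    intro l' ρ' v hv hlen
    exact ⟨hlen, (hOUTLAB l' ρ' (by rw [hlen]; exact hi1) (by rw [hlen]; exact hir)).2 ⟨v, hv⟩⟩
  have hex₁ : ∀ p : ↥S, ∃ mi : Fin n, (q₁ p.1.1, q₁ mi, p.1.2) ∈ M₁.E := by
    rintro ⟨⟨l', ρ'⟩, hlen, v, hv⟩
    obtain ⟨mi, rfl⟩ := hq₁.2 v
    exact ⟨mi, hv⟩
  have hex₂ : ∀ p : ↥S, ∃ mi : Fin n, (q₂ p.1.1, q₂ mi, p.1.2) ∈ M₂.E := by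
    rintro ⟨⟨l', ρ'⟩, hlen, hv⟩
    obtain ⟨v, hv'⟩ := (hOUTLAB l' ρ' (by rw [hlen]; exact hi1) (by rw [hlen]; exact hir)).1 hv
    obtain ⟨mi, rfl⟩ := hq₂.2 v
    exact ⟨mi, hv'⟩
  let t₁ : ↥S → Fin n := fun p => (hex₁ p).choose
  have ht₁ : ∀ p, (q₁ p.1.1, q₁ (t₁ p), p.1.2) ∈ M₁.E := fun p => (hex₁ p).choose_spec
  have ht₁u : ∀ (p : ↥S) (mi : Fin n), (q₁ p.1.1, q₁ mi, p.1.2) ∈ M₁.E → t₁ p = mi :=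
    fun p mi hmi => hq₁.1 (hD₁.2.1 _ _ _ _ (ht₁ p) hmi)
  let t₂ : ↥S → Fin n := fun p => (hex₂ p).choose
  have ht₂ : ∀ p, (q₂ p.1.1, q₂ (t₂ p), p.1.2) ∈ M₂.E := fun p => (hex₂ p).choose_spec
  have ht₂u : ∀ (p : ↥S) (mi : Fin n), (q₂ p.1.1, q₂ mi, p.1.2) ∈ M₂.E → t₂ p = mi :=
    fun p mi hmi => hq₂.1 (hD₂.2.1 _ _ _ _ (ht₂ p) hmi)
  have hembinj : Function.Injective
      (fun p : ↥S => toLex ((p : Fin n × List A).2.reverse, (p : Fin n × List A).1)) := by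
    intro p p' hcd
    have hcd' : ((p : Fin n × List A).2.reverse, (p : Fin n × List A).1)
        = ((p' : Fin n × List A).2.reverse, (p' : Fin n × List A).1) := hcd
    rw [Prod.mk.injEq] at hcd'
    exact Subtype.ext (Prod.ext hcd'.2 (List.reverse_injective hcd'.1))
  let LO : LinearOrder ↥S := LinearOrder.lift'
    (fun p : ↥S => toLex ((p : Fin n × List A).2.reverse, (p : Fin n × List A).1)) hembinj
  have hkey : ∀ {Q : Type} (M : GNFA A Q) (q : Fin n → Q),
      (∀ i j : Fin n, i < j → M.sordA (q i) (q j)) →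
      ∀ (t : ↥S → Fin n), (∀ p, (q p.1.1, q (t p), p.1.2) ∈ M.E) →
      @Monotone ↥S (Fin n) LO.toPartialOrder.toPreorder _ t := by
    intro Q M q hmono t ht p p' hle
    have hle2 : toLex ((p : Fin n × List A).2.reverse, (p : Fin n × List A).1)
        ≤ toLex ((p' : Fin n × List A).2.reverse, (p' : Fin n × List A).1) := hle
    rw [Prod.Lex.le_iff] at hle2
    rcases hle2 with hlt | ⟨heq, hle1⟩
    · have hlex : colexLt (p : Fin n × List A).2 (p' : Fin n × List A).2 := hlt
      exact BWT.target_mono M q hmono (ht p) (ht p')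
        (Or.inl ⟨hlex, (hSmem _ p.2).trans (hSmem _ p'.2).symm⟩)
    · have hlab : (p : Fin n × List A).2 = (p' : Fin n × List A).2 :=
        List.reverse_injective heq
      rcases lt_or_eq_of_le hle1 with hlt1 | heq1
      · exact BWT.target_mono M q hmono (ht p) (ht p') (Or.inr ⟨hlab, hlt1⟩)
      · have : p = p' := Subtype.ext (Prod.ext heq1 hlab)
        rw [this]
  have hm₁ := hkey M₁ q₁ hmono₁ t₁ ht₁
  have hm₂ := hkey M₂ q₂ hmono₂ t₂ ht₂
  have hfib : ∀ y, {p : ↥S | t₁ p = y}.ncard = {p : ↥S | t₂ p = y}.ncard := by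
    intro y
    rw [BWT.fiber_card M₁ hD₁ q₁ hq₁ hSmem hSall₁ t₁ ht₁ y,
        BWT.fiber_card M₂ hD₂ q₂ hq₂ hSmem hSall₂ t₂ ht₂ y]
    exact hIN y i hi1 hir
  have hteq : t₁ = t₂ :=
    @BWT.monotone_eq_of_fibers ↥S (Fin n) _ LO _ t₁ t₂ hm₁ hm₂ hfib
  have hpS : (l, ρ) ∈ S := ⟨hidef.symm, q₁ m, he⟩
  have h1 : t₁ ⟨(l, ρ), hpS⟩ = m := ht₁u ⟨(l, ρ), hpS⟩ m he
  have h2 : t₂ ⟨(l, ρ), hpS⟩ = m := by rw [← hteq]; exact h1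
  have h3 := ht₂ ⟨(l, ρ), hpS⟩
  rwa [h2] at h3

end BWTAux

/-- **The BWT of a Wheeler GDFA is a valid encoding**: if two Wheeler `r`-GDFAs with
`n` states (enumerated in `⪯_A`-order by `q₁`, `q₂`) have the same Burrows–Wheeler
Transform, then they are isomorphic.

Equality of the BWT components is encoded as follows. For a GDFA, distinct edges
leaving a state have distinct labels, so for each `1 ≤ i ≤ r` the pair of strings
`(OUT_i, LAB_i)` (outdegrees in unary; labels of the edges of `E(i)` sorted by start
state and then by label) carries exactly the following information: for each state
`Q[ℓ]` and each label `ρ` of length `i`, whether some edge labeled `ρ` leaves `Q[ℓ]`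
(hypothesis `hOUTLAB`). The string `IN_i` (indegrees in unary) carries exactly the
`i`-indegree of each state `Q[ℓ]` (hypothesis `hIN`). The bit string `FIN` carries
exactly finality of each `Q[ℓ]` (hypothesis `hFIN`). -/
theorem bwt_encodes_wheeler_GDFA {A Q₁ Q₂ : Type} [Fintype A] [LinearOrder A]
    (r : ℕ) (M₁ : GNFA A Q₁) (M₂ : GNFA A Q₂)
    (hD₁ : M₁.IsGDFA) (hr₁ : ∀ e ∈ M₁.E, e.2.2.length ≤ r) (hW₁ : M₁.Wheeler)
    (hD₂ : M₂.IsGDFA) (hr₂ : ∀ e ∈ M₂.E, e.2.2.length ≤ r) (hW₂ : M₂.Wheeler)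
    (n : ℕ) (q₁ : Fin n → Q₁) (hq₁ : Function.Bijective q₁)
    (hmono₁ : ∀ i j : Fin n, i < j → M₁.sordA (q₁ i) (q₁ j))
    (q₂ : Fin n → Q₂) (hq₂ : Function.Bijective q₂)
    (hmono₂ : ∀ i j : Fin n, i < j → M₂.sordA (q₂ i) (q₂ j))
    (hOUTLAB : ∀ (l : Fin n) (ρ : List A), 1 ≤ ρ.length → ρ.length ≤ r →
      ((∃ v, (q₁ l, v, ρ) ∈ M₁.E) ↔ (∃ v, (q₂ l, v, ρ) ∈ M₂.E)))
    (hIN : ∀ (l : Fin n) (i : ℕ), 1 ≤ i → i ≤ r →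
      {e ∈ M₁.E | e.2.1 = q₁ l ∧ e.2.2.length = i}.ncard =
        {e ∈ M₂.E | e.2.1 = q₂ l ∧ e.2.2.length = i}.ncard)
    (hFIN : ∀ l : Fin n, q₁ l ∈ M₁.final ↔ q₂ l ∈ M₂.final) :
    M₁.Isomorphic M₂ := by
  classical
  have key₁₂ : ∀ l m ρ, (q₁ l, q₁ m, ρ) ∈ M₁.E → (q₂ l, q₂ m, ρ) ∈ M₂.E :=
    fun l m ρ he => BWT.edge_transfer r M₁ M₂ hD₁ hr₁ hD₂ hr₂ q₁ hq₁ hmono₁ q₂ hq₂ hmono₂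
      hOUTLAB hIN l m ρ he
  have key₂₁ : ∀ l m ρ, (q₂ l, q₂ m, ρ) ∈ M₂.E → (q₁ l, q₁ m, ρ) ∈ M₁.E :=
    fun l m ρ he => BWT.edge_transfer r M₂ M₁ hD₂ hr₂ hD₁ hr₁ q₂ hq₂ hmono₂ q₁ hq₁ hmono₁
      (fun l' ρ' h1 h2 => (hOUTLAB l' ρ' h1 h2).symm)
      (fun l' i h1 h2 => (hIN l' i h1 h2).symm) l m ρ he
  let e₁ := Equiv.ofBijective q₁ hq₁
  let e₂ := Equiv.ofBijective q₂ hq₂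
  refine ⟨e₁.symm.trans e₂, ?_, ?_, ?_⟩
  · -- initial state
    show e₂ (e₁.symm M₁.init) = M₂.init
    have h1 : q₁ (e₁.symm M₁.init) = M₁.init := e₁.apply_symm_apply M₁.init
    have h2 : q₂ (e₂.symm M₂.init) = M₂.init := e₂.apply_symm_apply M₂.init
    have hidx : e₁.symm M₁.init = e₂.symm M₂.init :=
      le_antisymm (BWT.init_index_le M₁ q₁ hmono₁ h1 _) (BWT.init_index_le M₂ q₂ hmono₂ h2 _)
    show q₂ (e₁.symm M₁.init) = M₂.init
    rw [hidx]; exact h2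
  · intro u
    obtain ⟨l, rfl⟩ := hq₁.2 u
    have h2 : e₁.symm (q₁ l) = l := e₁.symm_apply_apply l
    show q₁ l ∈ M₁.final ↔ q₂ (e₁.symm (q₁ l)) ∈ M₂.final
    rw [h2]; exact hFIN l
  · intro u v ρ
    obtain ⟨l, rfl⟩ := hq₁.2 u
    obtain ⟨m, rfl⟩ := hq₁.2 v
    have h2 : e₁.symm (q₁ l) = l := e₁.symm_apply_apply l
    have h3 : e₁.symm (q₁ m) = m := e₁.symm_apply_apply m
    show (q₁ l, q₁ m, ρ) ∈ M₁.E ↔ (q₂ (e₁.symm (q₁ l)), q₂ (e₁.symm (q₁ m)), ρ) ∈ M₂.E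
    rw [h2, h3]
    exact ⟨key₁₂ l m ρ, key₂₁ l m ρ⟩
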